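/- arXiv:1003.1951 — 2 statements merged into one kernel-verified Lean document; each statement's English description precedes it below -/
import Mathlib

section
/- Let u, z₁, z₂ be complex numbers with |u| < 1, |z₁| < 1 and |z₂| < 1. Define the Möbius transformation Φ(u,z) = (z - u)/(1 - conj(u)·z) and the normalizing factor Δ(u,z) = (1 - conj(u)·z)/√(1 - |u|²). Then the series Σ_{k=0}^∞ [Φ(u,z₁)·conj(Φ(u,z₂))]^k converges and (1/(Δ(u,z₁)·conj(Δ(u,z₂)))) · Σ_{k=0}^∞ [Φ(u,z₁)·conj(Φ(u,z₂))]^k = 1/(1 - z₁·conj(z₂)); in particular this quantity does not depend on u. -/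
open Complex

/-- The Möbius transformation of the unit disk. -/
noncomputable def Phi (u z : ℂ) : ℂ := (z - u) / (1 - (starRingEnd ℂ) u * z)

/-- The normalizing factor `Δ(u,z) = (1 - conj u * z)/√(1-|u|²)`. -/
noncomputable def Delta (u z : ℂ) : ℂ :=
  (1 - (starRingEnd ℂ) u * z) / (Real.sqrt (1 - ‖u‖ ^ 2) : ℝ)

lemma denom_ne (u z : ℂ) (hu : ‖u‖ < 1) (hz : ‖z‖ < 1) :
    (1 - (starRingEnd ℂ) u * z) ≠ 0 := by
  intro h
  have h1 : ‖(starRingEnd ℂ) u * z‖ < 1 := by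
    rw [norm_mul, Complex.norm_conj]
    nlinarith [norm_nonneg u, norm_nonneg z]
  rw [(eq_of_sub_eq_zero h).symm] at h1
  simp at h1

lemma phi_lt (u z : ℂ) (hu : ‖u‖ < 1) (hz : ‖z‖ < 1) :
    ‖Phi u z‖ < 1 := by
  have hd := denom_ne u z hu hz
  rw [Phi, norm_div, div_lt_one (norm_pos_iff.mpr hd)]
  have key : Complex.normSq (1 - (starRingEnd ℂ) u * z) - Complex.normSq (z - u)
      = (1 - Complex.normSq u) * (1 - Complex.normSq z) := by
    have e : ∀ w : ℂ, (Complex.normSq w : ℂ) = w * (starRingEnd ℂ) w := by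
      intro w; rw [Complex.mul_conj]
    have : ((Complex.normSq (1 - (starRingEnd ℂ) u * z) - Complex.normSq (z - u) : ℝ) : ℂ)
        = ((1 - Complex.normSq u) * (1 - Complex.normSq z) : ℝ) := by
      push_cast
      rw [e, e, e, e]
      simp only [map_sub, map_one, map_mul, Complex.conj_conj]
      ring
    exact_mod_cast this
  have h1 : Complex.normSq u < 1 := by
    rw [← Complex.sq_norm]; nlinarith [norm_nonneg u]
  have h2 : Complex.normSq z < 1 := by
    rw [← Complex.sq_norm]; nlinarith [norm_nonneg z]
  have : Complex.normSq (z - u) < Complex.normSq (1 - (starRingEnd ℂ) u * z) := by nlinarith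
  have := Real.sqrt_lt_sqrt (Complex.normSq_nonneg _) this
  simpa [Complex.norm_def] using this

/-- For `|u| < 1`, `|z₁| < 1`, `|z₂| < 1`, the geometric series
`Σₖ (Φ(u,z₁) conj(Φ(u,z₂)))^k` converges, and dividing its sum by `Δ(u,z₁) conj(Δ(u,z₂))`
yields `1/(1 - z₁ conj z₂)`, independently of `u`. -/
theorem mobius_covariance_invariance (u z₁ z₂ : ℂ)
    (hu : ‖u‖ < 1) (h1 : ‖z₁‖ < 1) (h2 : ‖z₂‖ < 1) :
    Summable (fun k : ℕ => (Phi u z₁ * (starRingEnd ℂ) (Phi u z₂)) ^ k) ∧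
    (1 / (Delta u z₁ * (starRingEnd ℂ) (Delta u z₂))) *
        ∑' k : ℕ, (Phi u z₁ * (starRingEnd ℂ) (Phi u z₂)) ^ k
      = 1 / (1 - z₁ * (starRingEnd ℂ) z₂) := by
  have hrn : ‖Phi u z₁ * (starRingEnd ℂ) (Phi u z₂)‖ < 1 := by
    have := phi_lt u z₁ hu h1
    have := phi_lt u z₂ hu h2
    rw [norm_mul]
    simp only [Complex.norm_conj]
    nlinarith [norm_nonneg (Phi u z₁), norm_nonneg (Phi u z₂)]
  refine ⟨summable_geometric_of_norm_lt_one hrn, ?_⟩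
  rw [tsum_geometric_of_norm_lt_one hrn]
  have hd1 := denom_ne u z₁ hu h1
  have hd2 := denom_ne u z₂ hu h2
  have hd2' : (1 - u * (starRingEnd ℂ) z₂) ≠ 0 := by
    intro h
    apply hd2
    have := congrArg (starRingEnd ℂ) h
    simpa using this
  have hu2 : ‖u‖ ^ 2 < 1 := by nlinarith [norm_nonneg u]
  have hsq : ((Real.sqrt (1 - ‖u‖ ^ 2) : ℝ) : ℂ) ^ 2
      = 1 - (‖u‖ : ℂ) ^ 2 := by
    rw [← Complex.ofReal_pow, Real.sq_sqrt (by linarith)]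
    push_cast; ring
  have hsne : ((Real.sqrt (1 - ‖u‖ ^ 2) : ℝ) : ℂ) ≠ 0 := by
    exact_mod_cast (Real.sqrt_pos.mpr (by linarith)).ne'
  have habs : (‖u‖ : ℂ) ^ 2 = u * (starRingEnd ℂ) u := by
    have h' : (‖u‖ ^ 2 : ℝ) = Complex.normSq u := Complex.sq_norm u
    rw [Complex.mul_conj, ← h']; push_cast; ring
  have key : (1 - (starRingEnd ℂ) u * z₁) * (1 - u * (starRingEnd ℂ) z₂)
        * (1 - Phi u z₁ * (starRingEnd ℂ) (Phi u z₂))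
      = (1 - (‖u‖ : ℂ) ^ 2) * (1 - z₁ * (starRingEnd ℂ) z₂) := by
    rw [Phi, Phi, map_div₀]
    simp only [map_sub, map_mul, map_one, Complex.conj_conj]
    rw [habs]
    field_simp
    ring
  have hD : Delta u z₁ * (starRingEnd ℂ) (Delta u z₂)
        * (1 - Phi u z₁ * (starRingEnd ℂ) (Phi u z₂))
      = 1 - z₁ * (starRingEnd ℂ) z₂ := by
    rw [Delta, Delta, map_div₀]
    simp only [map_sub, map_mul, map_one, Complex.conj_conj, Complex.conj_ofReal]
    rw [div_mul_div_comm, div_mul_eq_mul_div, key]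
    have hne : (1 - (‖u‖ : ℂ) ^ 2) ≠ 0 := hsq ▸ pow_ne_zero 2 hsne
    rw [show ((Real.sqrt (1 - ‖u‖ ^ 2) : ℝ) : ℂ)
          * ((Real.sqrt (1 - ‖u‖ ^ 2) : ℝ) : ℂ) = 1 - (‖u‖ : ℂ) ^ 2 from by
        rw [← sq, hsq]]
    rw [mul_comm (1 - (‖u‖ : ℂ) ^ 2), mul_div_assoc, div_self hne, mul_one]
  rw [one_div, one_div, ← mul_inv, hD]
end

section
/- Fix a complex number z with |z| < 1, and let Φ(u,z) = (z - u)/(1 - conj(u)·z) and Δ(u,z) = (1 - conj(u)·z)/√(1 - |u|²). Then Σ_{k=0}^∞ |Φ(u,z)|^{4k}/|Δ(u,z)|⁴ tends to 0 as |u| → 1 with u ranging over the open unit disk. -/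
open Complex Filter

/-- The filter of `u` in the open unit disk with `|u| → 1`. -/
noncomputable def boundaryFilter : Filter ℂ := Filter.comap (fun u : ℂ => ‖u‖) (nhdsWithin 1 (Set.Iio 1))

lemma normSq_identity (u z : ℂ) :
    Complex.normSq (1 - (starRingEnd ℂ) u * z) - Complex.normSq (z - u)
      = (1 - Complex.normSq u) * (1 - Complex.normSq z) := by
  simp only [Complex.normSq_apply, Complex.sub_re, Complex.sub_im, Complex.mul_re,
    Complex.mul_im, Complex.one_re, Complex.one_im, Complex.conj_re, Complex.conj_im]
  ring

lemma key_bound (z : ℂ) (hz : ‖z‖ < 1) (u : ℂ) (hu : ‖u‖ < 1) :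
    ∑' k : ℕ, ‖Phi u z‖ ^ (4 * k) / ‖Delta u z‖ ^ 4
      ≤ (1 - ‖u‖ ^ 2) / ((1 - ‖z‖ ^ 2) * (1 - ‖z‖) ^ 2) := by
  set W : ℝ := ‖1 - (starRingEnd ℂ) u * z‖ with hWdef
  set A : ℝ := ‖z - u‖ with hAdef
  have hz0 : (0:ℝ) ≤ ‖z‖ := norm_nonneg z
  have hu0 : (0:ℝ) ≤ ‖u‖ := norm_nonneg u
  have hzpos : (0:ℝ) < 1 - ‖z‖ := by linarith
  have hu2 : (0:ℝ) < 1 - ‖u‖ ^ 2 := by nlinarith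
  have hz2 : (0:ℝ) < 1 - ‖z‖ ^ 2 := by nlinarith
  have hW : 1 - ‖z‖ ≤ W := by
    have h1 : ‖(1:ℂ)‖ - ‖(starRingEnd ℂ) u * z‖
        ≤ ‖1 - (starRingEnd ℂ) u * z‖ :=
      norm_sub_norm_le _ _
    have h2 : ‖(starRingEnd ℂ) u * z‖ ≤ ‖z‖ := by
      rw [norm_mul, Complex.norm_conj]
      nlinarith
    simp only [norm_one] at h1
    linarith
  have hWpos : (0:ℝ) < W := lt_of_lt_of_le hzpos hW
  have hA0 : (0:ℝ) ≤ A := norm_nonneg _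
  have key : W ^ 2 - A ^ 2 = (1 - ‖u‖ ^ 2) * (1 - ‖z‖ ^ 2) := by
    rw [hWdef, hAdef, Complex.sq_norm, Complex.sq_norm, Complex.sq_norm, Complex.sq_norm]
    exact normSq_identity u z
  have hAW : A < W := by
    have hsq : A ^ 2 < W ^ 2 := by nlinarith
    exact lt_of_pow_lt_pow_left₀ 2 (le_of_lt hWpos) hsq
  -- abs Phi = A / W
  have hPhi : ‖Phi u z‖ = A / W := by
    rw [Phi, norm_div]
  have hrlt : A / W < 1 := (div_lt_one hWpos).mpr hAW
  have hrnn : 0 ≤ A / W := div_nonneg hA0 (le_of_lt hWpos)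
  have hr4 : (A / W) ^ 4 < 1 := pow_lt_one₀ hrnn hrlt (by norm_num)
  have hr4nn : 0 ≤ (A / W) ^ 4 := pow_nonneg hrnn 4
  -- abs Delta ^ 4 = W^4 / (1 - |u|^2)^2
  have hs : Real.sqrt (1 - ‖u‖ ^ 2) ^ 2 = 1 - ‖u‖ ^ 2 :=
    Real.sq_sqrt (le_of_lt hu2)
  have hspos : (0:ℝ) < Real.sqrt (1 - ‖u‖ ^ 2) := Real.sqrt_pos.mpr hu2
  have hDelta : ‖Delta u z‖ ^ 4 = W ^ 4 / (1 - ‖u‖ ^ 2) ^ 2 := by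
    rw [Delta, norm_div, Complex.norm_real, Real.norm_eq_abs, abs_of_pos hspos, div_pow]
    congr 1
    calc Real.sqrt (1 - ‖u‖ ^ 2) ^ 4
        = (Real.sqrt (1 - ‖u‖ ^ 2) ^ 2) ^ 2 := by ring
      _ = (1 - ‖u‖ ^ 2) ^ 2 := by rw [hs]
  -- sum the geometric series
  have hsum : ∑' k : ℕ, ‖Phi u z‖ ^ (4 * k) / ‖Delta u z‖ ^ 4
      = (1 - (A / W) ^ 4)⁻¹ / (W ^ 4 / (1 - ‖u‖ ^ 2) ^ 2) := by
    rw [hDelta]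
    have : ∀ k : ℕ, ‖Phi u z‖ ^ (4 * k) = ((A / W) ^ 4) ^ k := by
      intro k
      rw [hPhi, pow_mul]
    simp_rw [this]
    rw [tsum_div_const, tsum_geometric_of_lt_one hr4nn hr4]
  rw [hsum]
  have h1r4 : 0 < 1 - (A / W) ^ 4 := by linarith
  have h1r2 : 0 < 1 - (A / W) ^ 2 := by
    have : (A / W) ^ 2 < 1 := pow_lt_one₀ hrnn hrlt (by norm_num)
    linarith
  have hr42 : (A / W) ^ 4 ≤ (A / W) ^ 2 := by
    have h1 : A / W ≤ 1 := le_of_lt hrlt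
    calc (A/W)^4 = ((A/W)^2)^2 := by ring
      _ ≤ (A/W)^2 * 1 := by nlinarith
      _ = (A/W)^2 := by ring
  have hWne : W ≠ 0 := ne_of_gt hWpos
  have h1r2eq : 1 - (A / W) ^ 2
      = (1 - ‖u‖ ^ 2) * (1 - ‖z‖ ^ 2) / W ^ 2 := by
    field_simp
    linarith [key]
  -- chain of inequalities
  calc (1 - (A / W) ^ 4)⁻¹ / (W ^ 4 / (1 - ‖u‖ ^ 2) ^ 2)
      ≤ (1 - (A / W) ^ 2)⁻¹ / (W ^ 4 / (1 - ‖u‖ ^ 2) ^ 2) := by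
        gcongr
      _ = (1 - ‖u‖ ^ 2) / ((1 - ‖z‖ ^ 2) * W ^ 2) := by
        rw [h1r2eq]
        field_simp
      _ ≤ (1 - ‖u‖ ^ 2) / ((1 - ‖z‖ ^ 2) * (1 - ‖z‖) ^ 2) := by
        gcongr

/-- For fixed `z` with `|z| < 1`, the sum
`Σₖ |Φ(u,z)|^{4k}/|Δ(u,z)|⁴` tends to `0` as `|u| → 1` with `u` in the open unit disk. -/
theorem fourth_power_series_tendsto_zero (z : ℂ) (hz : ‖z‖ < 1) :
    Tendsto (fun u : ℂ =>
        ∑' k : ℕ, ‖Phi u z‖ ^ (4 * k) / ‖Delta u z‖ ^ 4)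
      boundaryFilter (nhds 0) := by
  have h1 : Tendsto (fun u : ℂ => ‖u‖) boundaryFilter
      (nhdsWithin 1 (Set.Iio 1)) := tendsto_comap
  have h1' : Tendsto (fun u : ℂ => ‖u‖) boundaryFilter (nhds 1) :=
    h1.mono_right nhdsWithin_le_nhds
  have h2 : Tendsto (fun u : ℂ => 1 - ‖u‖ ^ 2) boundaryFilter (nhds 0) := by
    have h3 : Tendsto (fun u : ℂ => (1:ℝ) - ‖u‖ ^ 2) boundaryFilter
        (nhds (1 - 1 ^ 2)) := Tendsto.sub tendsto_const_nhds (h1'.pow 2)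
    simpa using h3
  have hev : ∀ᶠ u : ℂ in boundaryFilter, ‖u‖ < 1 := by
    have hmem : Set.Iio (1:ℝ) ∈ nhdsWithin (1:ℝ) (Set.Iio 1) := self_mem_nhdsWithin
    exact preimage_mem_comap hmem
  apply squeeze_zero'
  · exact Filter.Eventually.of_forall fun u =>
      tsum_nonneg fun k => div_nonneg (pow_nonneg (norm_nonneg _) _)
        (pow_nonneg (norm_nonneg _) _)
  · exact hev.mono fun u hu => key_bound z hz u hu
  · have := h2.div_const ((1 - ‖z‖ ^ 2) * (1 - ‖z‖) ^ 2)
    simpa using this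
end
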